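/- (SP-WENOc perturbation identity.) Assume Δz_{i+1/2} ≠ 0, θ_i^+ ≠ 1, and θ_{i+1}^- ≠ 1. Given any perturbations C_1, C_2 and any real G, the modified perturbations C̄_1 = C_1 - G/(4(1 - θ_i^+)) and C̄_2 = C_2 - G/(4(1 - θ_{i+1}^-)) produce the reconstructed jump ⟦z⟧_{i+1/2}(C̄_1, C̄_2) = (1/2)·[w̃_0(1 - θ_{i+1}^-) + w_1(1 - θ_i^+) + G]·Δz_{i+1/2}, where w_1 = 1/4 - 2C_1 and w̃_0 = 1/4 - 2C_2 are computed from the original perturbations. In particular, if w̃_0(1 - θ_{i+1}^-) + w_1(1 - θ_i^+) ≥ 0 and G ≥ 0, the modified reconstruction still satisfies the sign property ⟦z⟧_{i+1/2}·Δz_{i+1/2} ≥ 0. -/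
import Mathlib


/-- SP-WENOc perturbation identity: assume `Δz_{i+1/2} ≠ 0`,
`θ⁺_i ≠ 1`, `θ⁻_{i+1} ≠ 1`. Then for any perturbations `C₁, C₂` and any real
`G`, the modified perturbations `C̄₁ = C₁ - G/(4(1 - θ⁺_i))` and
`C̄₂ = C₂ - G/(4(1 - θ⁻_{i+1}))` produce the reconstructed jump
`(1/2)[w̃₀(1 - θ⁻_{i+1}) + w₁(1 - θ⁺_i) + G]·Δz_{i+1/2}` with
`w₁ = 1/4 - 2C₁`, `w̃₀ = 1/4 - 2C₂` computed from the original perturbations;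
in particular if the original sign-property constraint is nonnegative and
`G ≥ 0`, then the modified jump still satisfies the sign property. -/
theorem sp_wenoc_perturbation (zm z0 z1 z2 C1 C2 G : ℝ) (hΔ : z1 - z0 ≠ 0)
    (hθp : (z0 - zm)/(z1 - z0) ≠ 1) (hθm : (z2 - z1)/(z1 - z0) ≠ 1) :
    (((1/4 - 2*(C2 - G/(4*(1 - (z2 - z1)/(z1 - z0)))))*(3*z1 - z2)
        + (3/4 + 2*(C2 - G/(4*(1 - (z2 - z1)/(z1 - z0)))))*(z0 + z1))/2
      - ((3/4 + 2*(C1 - G/(4*(1 - (z0 - zm)/(z1 - z0)))))*(z0 + z1)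
        + (1/4 - 2*(C1 - G/(4*(1 - (z0 - zm)/(z1 - z0)))))*(3*z0 - zm))/2)
    = (1/2) * ((1/4 - 2*C2)*(1 - (z2 - z1)/(z1 - z0))
             + (1/4 - 2*C1)*(1 - (z0 - zm)/(z1 - z0)) + G) * (z1 - z0) ∧
    ((1/4 - 2*C2)*(1 - (z2 - z1)/(z1 - z0))
        + (1/4 - 2*C1)*(1 - (z0 - zm)/(z1 - z0)) ≥ 0 → G ≥ 0 →
      (((1/4 - 2*(C2 - G/(4*(1 - (z2 - z1)/(z1 - z0)))))*(3*z1 - z2)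
          + (3/4 + 2*(C2 - G/(4*(1 - (z2 - z1)/(z1 - z0)))))*(z0 + z1))/2
        - ((3/4 + 2*(C1 - G/(4*(1 - (z0 - zm)/(z1 - z0)))))*(z0 + z1)
          + (1/4 - 2*(C1 - G/(4*(1 - (z0 - zm)/(z1 - z0)))))*(3*z0 - zm))/2)
        * (z1 - z0) ≥ 0) := by
  have h1 : 1 - (z0 - zm)/(z1 - z0) ≠ 0 := sub_ne_zero.mpr (Ne.symm hθp)
  have h2 : 1 - (z2 - z1)/(z1 - z0) ≠ 0 := sub_ne_zero.mpr (Ne.symm hθm)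
  have ha : z1 - 2*z0 + zm ≠ 0 := by
    have e : z1 - 2*z0 + zm = (1 - (z0 - zm)/(z1 - z0)) * (z1 - z0) := by
      field_simp; ring
    rw [e]; exact mul_ne_zero h1 hΔ
  have hb : 2*z1 - z0 - z2 ≠ 0 := by
    have e : 2*z1 - z0 - z2 = (1 - (z2 - z1)/(z1 - z0)) * (z1 - z0) := by
      field_simp; ring
    rw [e]; exact mul_ne_zero h2 hΔ
  have key : (((1/4 - 2*(C2 - G/(4*(1 - (z2 - z1)/(z1 - z0)))))*(3*z1 - z2)
        + (3/4 + 2*(C2 - G/(4*(1 - (z2 - z1)/(z1 - z0)))))*(z0 + z1))/2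
      - ((3/4 + 2*(C1 - G/(4*(1 - (z0 - zm)/(z1 - z0)))))*(z0 + z1)
        + (1/4 - 2*(C1 - G/(4*(1 - (z0 - zm)/(z1 - z0)))))*(3*z0 - zm))/2)
    = (1/2) * ((1/4 - 2*C2)*(1 - (z2 - z1)/(z1 - z0))
             + (1/4 - 2*C1)*(1 - (z0 - zm)/(z1 - z0)) + G) * (z1 - z0) := by
    have ep : 1 - (z0 - zm)/(z1 - z0) = (z1 - 2*z0 + zm)/(z1 - z0) := by
      field_simp; ring
    have em : 1 - (z2 - z1)/(z1 - z0) = (2*z1 - z0 - z2)/(z1 - z0) := by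
      field_simp; ring
    rw [ep, em]
    field_simp [ha, hb]
    ring
  refine ⟨key, fun hA hG => ?_⟩
  rw [key]
  have : (1/2) * ((1/4 - 2*C2)*(1 - (z2 - z1)/(z1 - z0))
             + (1/4 - 2*C1)*(1 - (z0 - zm)/(z1 - z0)) + G) * (z1 - z0) * (z1 - z0)
      = (1/2) * ((1/4 - 2*C2)*(1 - (z2 - z1)/(z1 - z0))
             + (1/4 - 2*C1)*(1 - (z0 - zm)/(z1 - z0)) + G) * (z1 - z0)^2 := by ring
  rw [this]
  positivity
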